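/- Let I ⊆ ℝ be an open interval, let i ∈ {2, …, n}, and let ρ, u : ℝⁿ × I → ℝ be C¹ functions and q : ℝⁿ × I → ℝ a C² function, with ρ(x, t) > 0 everywhere, satisfying ∂_t ρ + ∂_{x₁}(ρ u) = 0 and ∂_t q + u ∂_{x₁} q = 0 on ℝⁿ × I. Then ∂_t (∂_{x_i} q / ρ) + u ∂_{x₁} (∂_{x_i} q / ρ) = (∂_{x_i} q / ρ) ∂_{x₁} u − (∂_{x₁} q / ρ) ∂_{x_i} u on ℝⁿ × I. -/

import Mathlib

open Set


private lemma fderiv_eval {E : Type*} [NormedAddCommGroup E] [NormedSpace ℝ E]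
    {f : E → ℝ} {p : E} (hf : DifferentiableAt ℝ (fderiv ℝ f) p) (c v : E) :
    fderiv ℝ (fun w => fderiv ℝ f w c) p v = fderiv ℝ (fderiv ℝ f) p v c := by
  have h := ((ContinuousLinearMap.apply ℝ ℝ c).hasFDerivAt.comp p hf.hasFDerivAt).fderiv
  have : (fun w => fderiv ℝ f w c) = (ContinuousLinearMap.apply ℝ ℝ c) ∘ (fderiv ℝ f) := rfl
  rw [this, h]; rfl

private lemma eval_diff {E : Type*} [NormedAddCommGroup E] [NormedSpace ℝ E]
    {f : E → ℝ} {p : E} (hf : DifferentiableAt ℝ (fderiv ℝ f) p) (c : E) :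
    DifferentiableAt ℝ (fun w => fderiv ℝ f w c) p :=
  ((ContinuousLinearMap.apply ℝ ℝ c).differentiable.differentiableAt).comp p hf

private lemma fderiv_div_apply' {E : Type*} [NormedAddCommGroup E] [NormedSpace ℝ E]
    {g r : E → ℝ} {p : E} (hg : DifferentiableAt ℝ g p) (hr : DifferentiableAt ℝ r p)
    (h0 : r p ≠ 0) (v : E) :
    fderiv ℝ (fun w => g w / r w) p v
      = (fderiv ℝ g p v * r p - g p * fderiv ℝ r p v) / (r p) ^ 2 := by
  have hinv : HasFDerivAt (fun w => (r w)⁻¹)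
      ((-ContinuousLinearMap.mulLeftRight ℝ ℝ (r p)⁻¹ (r p)⁻¹).comp (fderiv ℝ r p)) p :=
    (hasFDerivAt_inv' h0).comp p hr.hasFDerivAt
  have h := (hg.hasFDerivAt.mul hinv).fderiv
  have heq : (fun w => g w / r w) = fun w => g w * (r w)⁻¹ := by
    funext w; rw [div_eq_mul_inv]
  rw [heq, show (fun w => g w * (r w)⁻¹) = g * fun w => (r w)⁻¹ from rfl, h]
  simp only [ContinuousLinearMap.add_apply, ContinuousLinearMap.smul_apply,
    ContinuousLinearMap.comp_apply, ContinuousLinearMap.neg_apply,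
    ContinuousLinearMap.mulLeftRight_apply, smul_eq_mul]
  field_simp
  ring

/-- For a transverse direction `i ≠ 1` (0-indexed: `i ≠ 0`), the material derivative of
`∂_{x_i} q / ρ` along the unidirectional flow equals
`(∂_{x_i} q / ρ) ∂_{x₁} u − (∂_{x₁} q / ρ) ∂_{x_i} u`. -/
theorem stmt7 (n : ℕ) (hn : 0 < n) (I : Set ℝ) (hI_open : IsOpen I) (hI_conn : I.OrdConnected)
    (i : Fin n) (hi : (i : ℕ) ≠ 0)
    (ρ u : ((Fin n → ℝ) × ℝ) → ℝ) (q : ((Fin n → ℝ) × ℝ) → ℝ)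
    (hρ : ContDiffOn ℝ 1 ρ (Set.univ ×ˢ I))
    (hu : ContDiffOn ℝ 1 u (Set.univ ×ˢ I))
    (hq : ContDiffOn ℝ 2 q (Set.univ ×ˢ I))
    (hpos : ∀ p ∈ Set.univ ×ˢ I, 0 < ρ p)
    (hcont : ∀ p ∈ Set.univ ×ˢ I,
      fderiv ℝ ρ p ((0 : Fin n → ℝ), (1 : ℝ)) +
        fderiv ℝ (fun w => ρ w * u w) p
          ((Pi.single (⟨0, hn⟩ : Fin n) (1 : ℝ) : Fin n → ℝ), (0 : ℝ)) = 0)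
    (htrans : ∀ p ∈ Set.univ ×ˢ I,
      fderiv ℝ q p ((0 : Fin n → ℝ), (1 : ℝ)) +
        u p * fderiv ℝ q p
          ((Pi.single (⟨0, hn⟩ : Fin n) (1 : ℝ) : Fin n → ℝ), (0 : ℝ)) = 0) :
    ∀ p ∈ Set.univ ×ˢ I,
      fderiv ℝ (fun w =>
          fderiv ℝ q w ((Pi.single i (1 : ℝ) : Fin n → ℝ), (0 : ℝ)) / ρ w)
          p ((0 : Fin n → ℝ), (1 : ℝ)) +
        u p * fderiv ℝ (fun w =>
          fderiv ℝ q w ((Pi.single i (1 : ℝ) : Fin n → ℝ), (0 : ℝ)) / ρ w)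
          p ((Pi.single (⟨0, hn⟩ : Fin n) (1 : ℝ) : Fin n → ℝ), (0 : ℝ))
      = (fderiv ℝ q p ((Pi.single i (1 : ℝ) : Fin n → ℝ), (0 : ℝ)) / ρ p) *
          fderiv ℝ u p ((Pi.single (⟨0, hn⟩ : Fin n) (1 : ℝ) : Fin n → ℝ), (0 : ℝ))
        - (fderiv ℝ q p ((Pi.single (⟨0, hn⟩ : Fin n) (1 : ℝ) : Fin n → ℝ), (0 : ℝ)) / ρ p) *
          fderiv ℝ u p ((Pi.single i (1 : ℝ) : Fin n → ℝ), (0 : ℝ)) := by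
  intro p hp
  set S : Set ((Fin n → ℝ) × ℝ) := Set.univ ×ˢ I with hS_def
  have hS : IsOpen S := isOpen_univ.prod hI_open
  have hmem : S ∈ nhds p := hS.mem_nhds hp
  set e1 : (Fin n → ℝ) × ℝ := ((Pi.single (⟨0, hn⟩ : Fin n) (1 : ℝ) : Fin n → ℝ), (0 : ℝ))
  set ei : (Fin n → ℝ) × ℝ := ((Pi.single i (1 : ℝ) : Fin n → ℝ), (0 : ℝ))
  set et : (Fin n → ℝ) × ℝ := ((0 : Fin n → ℝ), (1 : ℝ))
  -- differentiability facts on S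
  have hq2 : ∀ y ∈ S, ContDiffAt ℝ 2 q y := fun y hy => hq.contDiffAt (hS.mem_nhds hy)
  have hqd : ∀ y ∈ S, DifferentiableAt ℝ q y := fun y hy =>
    (hq2 y hy).differentiableAt (by norm_num)
  have hq' : ∀ y ∈ S, DifferentiableAt ℝ (fderiv ℝ q) y := fun y hy =>
    ((hq2 y hy).fderiv_right (m := 1) (by norm_num)).differentiableAt (by norm_num)
  have hud : ∀ y ∈ S, DifferentiableAt ℝ u y := fun y hy =>
    (hu.contDiffAt (hS.mem_nhds hy)).differentiableAt (by norm_num)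
  have hρd : ∀ y ∈ S, DifferentiableAt ℝ ρ y := fun y hy =>
    (hρ.contDiffAt (hS.mem_nhds hy)).differentiableAt (by norm_num)
  have hρ0 : ρ p ≠ 0 := ne_of_gt (hpos p hp)
  have hsymm : ∀ v w, fderiv ℝ (fderiv ℝ q) p v w = fderiv ℝ (fderiv ℝ q) p w v :=
    (hq2 p hp).isSymmSndFDerivAt (by norm_num)
  -- differentiate the transport equation at p
  have hF : (fun w => fderiv ℝ q w et + u w * fderiv ℝ q w e1)
      =ᶠ[nhds p] (fun _ => (0 : ℝ)) := by
    filter_upwards [hmem] with y hy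
    exact htrans y hy
  have hFderiv : fderiv ℝ (fun w => fderiv ℝ q w et + u w * fderiv ℝ q w e1) p = 0 := by
    rw [hF.fderiv_eq, fderiv_fun_const]; rfl
  have hdet : DifferentiableAt ℝ (fun w => fderiv ℝ q w et) p := eval_diff (hq' p hp) et
  have hde1 : DifferentiableAt ℝ (fun w => fderiv ℝ q w e1) p := eval_diff (hq' p hp) e1
  have hdei : DifferentiableAt ℝ (fun w => fderiv ℝ q w ei) p := eval_diff (hq' p hp) ei
  have hmul : DifferentiableAt ℝ (fun w => u w * fderiv ℝ q w e1) p :=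
    (hud p hp).mul hde1
  have hsum := fderiv_fun_add hdet hmul
  have hmulD := fderiv_fun_mul (hud p hp) hde1
  have key : fderiv ℝ (fderiv ℝ q) p ei et
      + (u p * fderiv ℝ (fderiv ℝ q) p ei e1
        + fderiv ℝ q p e1 * fderiv ℝ u p ei) = 0 := by
    have h0 : fderiv ℝ (fun w => fderiv ℝ q w et + u w * fderiv ℝ q w e1) p ei = 0 := by
      rw [hFderiv]; rfl
    rw [hsum] at h0
    simp only [ContinuousLinearMap.add_apply] at h0
    rw [hmulD] at h0
    simp only [ContinuousLinearMap.add_apply, ContinuousLinearMap.smul_apply,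
      smul_eq_mul] at h0
    rw [fderiv_eval (hq' p hp) et ei, fderiv_eval (hq' p hp) e1 ei] at h0
    linarith
  -- continuity equation at p
  have hcont' : fderiv ℝ ρ p et + (ρ p * fderiv ℝ u p e1 + u p * fderiv ℝ ρ p e1) = 0 := by
    have h := hcont p hp
    rw [fderiv_fun_mul (hρd p hp) (hud p hp)] at h
    simpa using h
  -- quotient rule values
  have hqt : fderiv ℝ (fun w => fderiv ℝ q w ei / ρ w) p et
      = (fderiv ℝ (fderiv ℝ q) p ei et * ρ p
          - fderiv ℝ q p ei * fderiv ℝ ρ p et) / (ρ p) ^ 2 := by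
    rw [fderiv_div_apply' hdei (hρd p hp) hρ0 et, fderiv_eval (hq' p hp) ei et, hsymm]
  have hq1 : fderiv ℝ (fun w => fderiv ℝ q w ei / ρ w) p e1
      = (fderiv ℝ (fderiv ℝ q) p ei e1 * ρ p
          - fderiv ℝ q p ei * fderiv ℝ ρ p e1) / (ρ p) ^ 2 := by
    rw [fderiv_div_apply' hdei (hρd p hp) hρ0 e1, fderiv_eval (hq' p hp) ei e1, hsymm]
  rw [hqt, hq1]
  have h1 : fderiv ℝ (fderiv ℝ q) p ei et
      = -(u p * fderiv ℝ (fderiv ℝ q) p ei e1 + fderiv ℝ q p e1 * fderiv ℝ u p ei) := by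
    linarith
  have h2 : fderiv ℝ ρ p et = -(ρ p * fderiv ℝ u p e1 + u p * fderiv ℝ ρ p e1) := by
    linarith
  rw [h1, h2]
  field_simp
  ring
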